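/- (Runge-type addition formula) For all natural numbers m and n and all real x and y, H_{m,n}(x+y) = m!·n!·(1/√2)^{m+n} · Σ_{k=0}^{m} Σ_{j=0}^{n} (H_{k,j}(√2·x) / (k!·j!)) · (H_{m−k,n−j}(√2·y) / ((m−k)!·(n−j)!)). -/

import Mathlib

open Polynomial Finset

/-- The operator `A p = 2·X·p − p′`. -/
noncomputable def A (p : ℝ[X]) : ℝ[X] := 2 * X * p - derivative p

/-- The two-index Hermite polynomial `H_{m,n} = A^m (X^n)`. -/
noncomputable def H (m n : ℕ) : ℝ[X] := A^[m] (X ^ n)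

lemma A_add (p q : ℝ[X]) : A (p + q) = A p + A q := by
  simp [A]; ring

lemma A_C_mul (a : ℝ) (p : ℝ[X]) : A (C a * p) = C a * A p := by
  simp [A, derivative_C_mul]; ring

lemma iter_C_mul (m : ℕ) (a : ℝ) (p : ℝ[X]) : A^[m] (C a * p) = C a * A^[m] p := by
  induction m with
  | zero => simp
  | succ k ih => rw [Function.iterate_succ_apply', Function.iterate_succ_apply', ih, A_C_mul]

lemma A_natCast_mul (a : ℕ) (p : ℝ[X]) : A ((a : ℝ[X]) * p) = (a : ℝ[X]) * A p := by
  rw [← C_eq_natCast, A_C_mul]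

lemma deriv_A (p : ℝ[X]) : derivative (A p) = A (derivative p) + 2 * p := by
  simp only [A, derivative_sub, derivative_mul, derivative_X, derivative_ofNat]
  ring

lemma deriv_iter (m : ℕ) (p : ℝ[X]) :
    derivative (A^[m] p) = A^[m] (derivative p) + ((2*m : ℕ) : ℝ[X]) * A^[m-1] p := by
  induction m with
  | zero => simp
  | succ k ih =>
      rw [Function.iterate_succ_apply', deriv_A, ih, A_add, A_natCast_mul,
        ← Function.iterate_succ_apply' A k]
      cases k with
      | zero => simp
      | succ l =>
          simp only [Nat.add_sub_cancel, ← Function.iterate_succ_apply' A l]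
          push_cast
          ring

lemma hrec (m n : ℕ) (t : ℝ) :
    (H (m+1) n).eval t = 2*t*(H m n).eval t - (n:ℝ)*(H m (n-1)).eval t
      - 2*(m:ℝ)*(H (m-1) n).eval t := by
  have h1 : H (m+1) n = A (H m n) := Function.iterate_succ_apply' A m _
  have h2 : derivative (H m n) = C (n:ℝ) * H m (n-1) + ((2*m : ℕ) : ℝ[X]) * H (m-1) n := by
    rw [H, deriv_iter, derivative_X_pow, iter_C_mul]
    rfl
  rw [h1]
  show (2 * X * H m n - derivative (H m n)).eval t = _
  rw [h2]
  simp
  push_cast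
  ring

lemma pascal_split (m : ℕ) (f : ℕ → ℝ) :
    ∑ k ∈ range (m+2), ((m+1).choose k : ℝ) * f k
      = ∑ k ∈ range (m+1), (m.choose k : ℝ) * f k
        + ∑ k ∈ range (m+1), (m.choose k : ℝ) * f (k+1) := by
  rw [Finset.sum_range_succ' _ (m+1)]
  have h1 : ∀ k ∈ range (m+1), ((m+1).choose (k+1) : ℝ) * f (k+1)
      = (m.choose k : ℝ) * f (k+1) + (m.choose (k+1) : ℝ) * f (k+1) := by
    intro k _
    rw [Nat.choose_succ_succ]
    push_cast
    ring
  rw [Finset.sum_congr rfl h1, Finset.sum_add_distrib]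
  have h2 : ∑ k ∈ range (m+1), (m.choose (k+1) : ℝ) * f (k+1) + ((m+1).choose 0 : ℝ) * f 0
      = ∑ k ∈ range (m+1), (m.choose k : ℝ) * f k := by
    have := Finset.sum_range_succ' (fun k => (m.choose k : ℝ) * f k) (m+1)
    rw [Finset.sum_range_succ (fun k => (m.choose k : ℝ) * f k) (m+1)] at this
    simp [Nat.choose_succ_self] at this ⊢
    linarith [this]
  linarith [h2]

lemma L1 (n : ℕ) (a b : ℕ → ℝ) :
    ∑ j ∈ range (n+1), (n.choose j : ℝ) *
        ((j:ℝ) * a (j-1) * b (n-j) + ((n-j : ℕ):ℝ) * a j * b (n-j-1))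
      = 2 * n * ∑ j ∈ range (n-1+1), ((n-1).choose j : ℝ) * a j * b (n-1-j) := by
  cases n with
  | zero => simp
  | succ p =>
      simp only [Nat.add_sub_cancel]
      have split : ∀ j ∈ range (p+2), ((p+1).choose j : ℝ) *
          ((j:ℝ) * a (j-1) * b (p+1-j) + ((p+1-j : ℕ):ℝ) * a j * b (p+1-j-1))
        = ((p+1).choose j : ℝ) * (j:ℝ) * a (j-1) * b (p+1-j)
          + ((p+1).choose j : ℝ) * ((p+1-j : ℕ):ℝ) * a j * b (p+1-j-1) := by
        intro j _; ring
      rw [Finset.sum_congr rfl split, Finset.sum_add_distrib]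
      have hA : ∑ j ∈ range (p+2), ((p+1).choose j : ℝ) * (j:ℝ) * a (j-1) * b (p+1-j)
          = (p+1 : ℝ) * ∑ j ∈ range (p+1), (p.choose j : ℝ) * a j * b (p-j) := by
        rw [Finset.sum_range_succ' _ (p+1)]
        simp only [Nat.cast_zero, mul_zero, zero_mul, add_zero, Nat.add_sub_cancel]
        rw [Finset.mul_sum]
        apply Finset.sum_congr rfl
        intro i hi
        have : ((p+1).choose (i+1) : ℝ) * ((i+1 : ℕ) : ℝ) = ((p+1 : ℕ) : ℝ) * (p.choose i : ℝ) := by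
          rw [← Nat.cast_mul, ← Nat.cast_mul, Nat.add_one_mul_choose_eq, Nat.mul_comm]
        have harg : p + 1 - (i+1) = p - i := by omega
        rw [harg]
        push_cast at this ⊢
        linear_combination this * (a i * b (p - i))
      have hB : ∑ j ∈ range (p+2), ((p+1).choose j : ℝ) * ((p+1-j : ℕ):ℝ) * a j * b (p+1-j-1)
          = (p+1 : ℝ) * ∑ j ∈ range (p+1), (p.choose j : ℝ) * a j * b (p-j) := by
        rw [Finset.sum_range_succ]
        simp only [Nat.sub_self, Nat.cast_zero, mul_zero, zero_mul, add_zero]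
        rw [Finset.mul_sum]
        apply Finset.sum_congr rfl
        intro j hj
        have hj' : j ≤ p := by simpa [Nat.lt_succ_iff] using hj
        have key : (p.choose j) * (p + 1) = ((p+1).choose j) * (p + 1 - j) :=
          Nat.choose_mul_succ_eq p j
        have harg : p + 1 - j - 1 = p - j := by omega
        rw [harg]
        have := congrArg (fun z : ℕ => (z : ℝ)) key
        push_cast at this ⊢
        linear_combination -this * (a j * b (p - j))
      rw [hA, hB]
      push_cast
      ring

noncomputable def S (a b : ℝ) (m n : ℕ) : ℝ :=
  ∑ k ∈ range (m+1), ∑ j ∈ range (n+1),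
    (m.choose k : ℝ) * (n.choose j : ℝ) * (H k j).eval a * (H (m-k) (n-j)).eval b

lemma inner_step (a b : ℝ) (m n k : ℕ) (hk : k ≤ m) :
    (∑ j ∈ range (n+1), (n.choose j:ℝ) * (H k j).eval a * (H (m+1-k) (n-j)).eval b)
    + (∑ j ∈ range (n+1), (n.choose j:ℝ) * (H (k+1) j).eval a * (H (m-k) (n-j)).eval b)
    = (2*a+2*b) * (∑ j ∈ range (n+1), (n.choose j:ℝ) * (H k j).eval a * (H (m-k) (n-j)).eval b)
      - (∑ j ∈ range (n+1), (n.choose j:ℝ) *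
          ((j:ℝ) * (H k (j-1)).eval a * (H (m-k) (n-j)).eval b
            + ((n-j:ℕ):ℝ) * (H k j).eval a * (H (m-k) (n-j-1)).eval b))
      - 2 * (∑ j ∈ range (n+1), (n.choose j:ℝ) *
          ((k:ℝ) * (H (k-1) j).eval a * (H (m-k) (n-j)).eval b
            + ((m-k:ℕ):ℝ) * (H k j).eval a * (H (m-k-1) (n-j)).eval b)) := by
  rw [← Finset.sum_add_distrib, Finset.mul_sum, ← Finset.sum_sub_distrib,
    Finset.mul_sum, ← Finset.sum_sub_distrib]
  apply Finset.sum_congr rfl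
  intro j _
  have hmk : m + 1 - k = (m - k) + 1 := by omega
  rw [hmk, hrec (m-k) (n-j) b, hrec k j a]
  push_cast
  ring

lemma Sstep (a b : ℝ) (m n : ℕ) :
    S a b (m+1) n = (2*a+2*b) * S a b m n - 2*n * S a b m (n-1) - 4*m * S a b (m-1) n := by
  have step1 : S a b (m+1) n = ∑ k ∈ range (m+2), ((m+1).choose k : ℝ) *
      (∑ j ∈ range (n+1), (n.choose j:ℝ) * (H k j).eval a * (H (m+1-k) (n-j)).eval b) := by
    unfold S
    refine Finset.sum_congr rfl fun k _ => ?_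
    rw [Finset.mul_sum]
    exact Finset.sum_congr rfl fun j _ => by ring
  rw [step1, pascal_split m, ← Finset.sum_add_distrib]
  have step2 : ∀ k ∈ range (m+1),
      ((m.choose k : ℝ) * (∑ j ∈ range (n+1), (n.choose j:ℝ) * (H k j).eval a * (H (m+1-k) (n-j)).eval b)
        + (m.choose k : ℝ) * (∑ j ∈ range (n+1), (n.choose j:ℝ) * (H (k+1) j).eval a * (H (m+1-(k+1)) (n-j)).eval b))
      = (m.choose k : ℝ) * ((2*a+2*b) * (∑ j ∈ range (n+1), (n.choose j:ℝ) * (H k j).eval a * (H (m-k) (n-j)).eval b))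
        - (m.choose k : ℝ) * (2*n * (∑ j ∈ range (n-1+1), ((n-1).choose j : ℝ) * (H k j).eval a * (H (m-k) (n-1-j)).eval b))
        - 2 * ((m.choose k : ℝ) * (∑ j ∈ range (n+1), (n.choose j:ℝ) *
            ((k:ℝ) * (H (k-1) j).eval a * (H (m-k) (n-j)).eval b
              + ((m-k:ℕ):ℝ) * (H k j).eval a * (H (m-k-1) (n-j)).eval b))) := by
    intro k hk
    have hk' : k ≤ m := by simpa [Nat.lt_succ_iff] using hk
    have h1 : m + 1 - (k+1) = m - k := by omega
    rw [h1, ← mul_add, inner_step a b m n k hk',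
      L1 n (fun i => (H k i).eval a) (fun q => (H (m-k) q).eval b)]
    ring_nf
    congr 3
    exact Finset.sum_congr rfl fun x _ => by ring
  rw [Finset.sum_congr rfl step2]
  rw [Finset.sum_sub_distrib, Finset.sum_sub_distrib]
  congr 1
  · congr 1
    · simp only [S, Finset.mul_sum]
      exact Finset.sum_congr rfl fun k _ => Finset.sum_congr rfl fun j _ => by ring
    · simp only [S, Finset.mul_sum]
      exact Finset.sum_congr rfl fun k _ => Finset.sum_congr rfl fun j _ => by ring
  · -- third piece = 4m * S (m-1) n
    have lhs_eq : ∑ k ∈ range (m+1), (2 * ((m.choose k : ℝ) * (∑ j ∈ range (n+1), (n.choose j:ℝ) *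
            ((k:ℝ) * (H (k-1) j).eval a * (H (m-k) (n-j)).eval b
              + ((m-k:ℕ):ℝ) * (H k j).eval a * (H (m-k-1) (n-j)).eval b))))
        = ∑ j ∈ range (n+1), ∑ k ∈ range (m+1), (2 * ((m.choose k : ℝ) * ((n.choose j:ℝ) *
            ((k:ℝ) * (H (k-1) j).eval a * (H (m-k) (n-j)).eval b
              + ((m-k:ℕ):ℝ) * (H k j).eval a * (H (m-k-1) (n-j)).eval b)))) := by
      rw [Finset.sum_comm]
      exact Finset.sum_congr rfl fun k _ => by rw [Finset.mul_sum, Finset.mul_sum]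
    rw [lhs_eq]
    have jstep : ∀ j ∈ range (n+1),
        (∑ k ∈ range (m+1), (2 * ((m.choose k : ℝ) * ((n.choose j:ℝ) *
            ((k:ℝ) * (H (k-1) j).eval a * (H (m-k) (n-j)).eval b
              + ((m-k:ℕ):ℝ) * (H k j).eval a * (H (m-k-1) (n-j)).eval b)))))
        = 4*(m:ℝ)*(n.choose j:ℝ) *
            ∑ k ∈ range (m-1+1), ((m-1).choose k : ℝ) * (H k j).eval a * (H (m-1-k) (n-j)).eval b := by
      intro j _
      have hj := L1 m (fun i => (H i j).eval a) (fun q => (H q (n-j)).eval b)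
      calc ∑ k ∈ range (m+1), (2 * ((m.choose k : ℝ) * ((n.choose j:ℝ) *
            ((k:ℝ) * (H (k-1) j).eval a * (H (m-k) (n-j)).eval b
              + ((m-k:ℕ):ℝ) * (H k j).eval a * (H (m-k-1) (n-j)).eval b))))
          = 2 * (n.choose j:ℝ) * ∑ k ∈ range (m+1), (m.choose k : ℝ) *
            ((k:ℝ) * (H (k-1) j).eval a * (H (m-k) (n-j)).eval b
              + ((m-k:ℕ):ℝ) * (H k j).eval a * (H (m-k-1) (n-j)).eval b) := by
            rw [Finset.mul_sum]
            exact Finset.sum_congr rfl fun k _ => by ring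
        _ = _ := by rw [hj]; ring
    rw [Finset.sum_congr rfl jstep]
    have : (4*(m:ℝ)) * S a b (m-1) n = ∑ j ∈ range (n+1), ∑ k ∈ range (m-1+1),
        (4*(m:ℝ)*(n.choose j:ℝ) * (((m-1).choose k : ℝ) * (H k j).eval a * (H (m-1-k) (n-j)).eval b)) := by
      simp only [S, Finset.mul_sum]
      rw [Finset.sum_comm]
      exact Finset.sum_congr rfl fun k _ => Finset.sum_congr rfl fun j _ => by ring
    rw [this]
    exact Finset.sum_congr rfl fun j _ => by rw [Finset.mul_sum]

lemma key (x y : ℝ) : ∀ m n : ℕ,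
    (Real.sqrt 2)^(m+n) * (H m n).eval (x+y) = S (Real.sqrt 2*x) (Real.sqrt 2*y) m n := by
  have hc : (Real.sqrt 2)^2 = 2 := Real.sq_sqrt (by norm_num)
  intro m
  induction m using Nat.strong_induction_on with
  | _ m ih =>
    match m with
    | 0 =>
        intro n
        have hS0 : S (Real.sqrt 2*x) (Real.sqrt 2*y) 0 n
            = ∑ j ∈ range (n+1), (Real.sqrt 2*x)^j * (Real.sqrt 2*y)^(n-j) * (n.choose j:ℝ) := by
          unfold S
          simp only [zero_add]
          rw [Finset.sum_range_one]
          refine Finset.sum_congr rfl fun j _ => ?_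
          simp only [H, Function.iterate_zero, id_eq, Nat.sub_zero, Nat.sub_self,
            Nat.choose_self, Nat.cast_one, eval_pow, eval_X]
          ring
        have hH0 : (H 0 n).eval (x+y) = (x+y)^n := by simp [H]
        rw [hS0, hH0, zero_add, ← mul_pow, mul_add, add_pow]
    | p+1 =>
        intro n
        have IH1 := ih p (by omega)
        have IH2 := ih (p-1) (by omega)
        rw [Sstep, hrec p n (x+y)]
        have e1 : (Real.sqrt 2)^(p+1+n) * (2*(x+y)*(H p n).eval (x+y))
            = (2*(Real.sqrt 2*x)+2*(Real.sqrt 2*y)) * S (Real.sqrt 2*x) (Real.sqrt 2*y) p n := by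
          rw [← IH1 n]
          have h1 : p+1+n = (p+n)+1 := by omega
          rw [h1, pow_succ]
          ring
        have e2 : (Real.sqrt 2)^(p+1+n) * ((n:ℝ) * (H p (n-1)).eval (x+y))
            = 2*(n:ℝ) * S (Real.sqrt 2*x) (Real.sqrt 2*y) p (n-1) := by
          cases n with
          | zero => simp
          | succ q =>
              have h1 : p+1+(q+1) = (p+q)+2 := by omega
              have h2 : (q+1) - 1 = q := by omega
              rw [h1, h2, pow_add, hc, ← IH1 q]
              push_cast
              ring
        have e3 : (Real.sqrt 2)^(p+1+n) * (2*(p:ℝ) * (H (p-1) n).eval (x+y))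
            = 4*(p:ℝ) * S (Real.sqrt 2*x) (Real.sqrt 2*y) (p-1) n := by
          cases p with
          | zero => simp
          | succ r =>
              have h1 : r+1+1+n = (r+n)+2 := by omega
              have h2 : (r+1) - 1 = r := by omega
              simp only [Nat.add_sub_cancel] at IH2
              rw [h1, h2, pow_add, hc, ← IH2]
              push_cast
              ring
        push_cast
        push_cast at e1 e2 e3
        linear_combination e1 - e2 - e3

theorem hmn_addition (m n : ℕ) (x y : ℝ) :
    (H m n).eval (x + y) =
      (m.factorial : ℝ) * (n.factorial : ℝ) * (1 / Real.sqrt 2) ^ (m + n) *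
        ∑ k ∈ range (m + 1), ∑ j ∈ range (n + 1),
          ((H k j).eval (Real.sqrt 2 * x) / ((k.factorial : ℝ) * (j.factorial : ℝ))) *
            ((H (m - k) (n - j)).eval (Real.sqrt 2 * y) /
              (((m - k).factorial : ℝ) * ((n - j).factorial : ℝ))) := by
  have hc0 : Real.sqrt 2 ≠ 0 := by positivity
  have hpow : (Real.sqrt 2)^(m+n) ≠ 0 := pow_ne_zero _ hc0
  have hT : (m.factorial : ℝ) * (n.factorial : ℝ) *
      ∑ k ∈ range (m + 1), ∑ j ∈ range (n + 1),
          ((H k j).eval (Real.sqrt 2 * x) / ((k.factorial : ℝ) * (j.factorial : ℝ))) *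
            ((H (m - k) (n - j)).eval (Real.sqrt 2 * y) /
              (((m - k).factorial : ℝ) * ((n - j).factorial : ℝ)))
      = S (Real.sqrt 2*x) (Real.sqrt 2*y) m n := by
    unfold S
    rw [Finset.mul_sum]
    refine Finset.sum_congr rfl fun k hk => ?_
    rw [Finset.mul_sum]
    refine Finset.sum_congr rfl fun j hj => ?_
    have hk' : k ≤ m := by simpa [Nat.lt_succ_iff] using hk
    have hj' : j ≤ n := by simpa [Nat.lt_succ_iff] using hj
    have h1 : (m.factorial : ℝ) = (m.choose k : ℝ) * (k.factorial : ℝ) * ((m-k).factorial : ℝ) := by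
      rw [← Nat.cast_mul, ← Nat.cast_mul, Nat.choose_mul_factorial_mul_factorial hk']
    have h2 : (n.factorial : ℝ) = (n.choose j : ℝ) * (j.factorial : ℝ) * ((n-j).factorial : ℝ) := by
      rw [← Nat.cast_mul, ← Nat.cast_mul, Nat.choose_mul_factorial_mul_factorial hj']
    rw [h1, h2]
    have f1 : (k.factorial : ℝ) ≠ 0 := Nat.cast_ne_zero.2 (Nat.factorial_ne_zero k)
    have f2 : (j.factorial : ℝ) ≠ 0 := Nat.cast_ne_zero.2 (Nat.factorial_ne_zero j)
    have f3 : ((m-k).factorial : ℝ) ≠ 0 := Nat.cast_ne_zero.2 (Nat.factorial_ne_zero _)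
    have f4 : ((n-j).factorial : ℝ) ≠ 0 := Nat.cast_ne_zero.2 (Nat.factorial_ne_zero _)
    field_simp
  apply mul_left_cancel₀ hpow
  rw [key x y m n, ← hT]
  rw [div_pow, one_pow]
  field_simp
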